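/- Theorem 1 (main result): The spectral radius 𝐫 of the memory operator 𝐦, acting as a bounded linear operator on C(𝒮, ℝ), is bounded below by the spectral radius r of the mean reproduction matrix m; that is, 𝐫 ≥ r. -/

import Mathlib

open Filter Topology

/-- Concatenation of a type `t` with a memory sequence `x`. -/
def memCons {S : Type*} (t : S) (x : ℕ → S) : ℕ → S
  | 0 => t
  | n + 1 => x n

lemma matpow_nonneg {S : Type*} [Fintype S] [DecidableEq S]
    (m : S → S → ℝ) (hm : ∀ s t, 0 ≤ m s t) :
    ∀ (n : ℕ) (s t : S), 0 ≤ ((Matrix.of m) ^ n) s t := by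
  intro n
  induction n with
  | zero => intro s t; simp [Matrix.one_apply]; positivity
  | succ n ih =>
    intro s t
    rw [pow_succ, Matrix.mul_apply]
    exact Finset.sum_nonneg fun u _ => mul_nonneg (ih s u) (hm u t)

lemma clm_pow_apply {S : Type*} [Fintype S] [DecidableEq S]
    (m : S → S → ℝ) (M : (S → ℝ) →L[ℝ] (S → ℝ))
    (hM : ∀ (v : S → ℝ) (s : S), M v s = ∑ t : S, m s t * v t) :
    ∀ (n : ℕ) (v : S → ℝ) (s : S),
      (M ^ n) v s = ∑ t : S, ((Matrix.of m) ^ n) s t * v t := by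
  intro n
  induction n with
  | zero => intro v s; simp [Matrix.one_apply]
  | succ n ih =>
    intro v s
    have h1 : (M ^ (n+1)) v = (M ^ n) (M v) := by rw [pow_succ]; rfl
    rw [h1, ih (M v) s]
    have h2 : ∀ t, M v t = ∑ u : S, m t u * v u := fun t => hM v t
    simp_rw [h2, Finset.mul_sum]
    rw [Finset.sum_comm, pow_succ]
    congr 1
    ext u
    rw [Matrix.mul_apply, Finset.sum_mul]
    congr 1
    ext t
    simp [Matrix.of_apply]; ring

lemma subinvariant_vector {S : Type*} [Fintype S] [Nonempty S] [DecidableEq S]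
    (m : S → S → ℝ)
    (hm_nonneg : ∀ s t, 0 ≤ m s t)
    (hm_prim : ∃ k : ℕ, 1 ≤ k ∧ ∀ s t, 0 < ((Matrix.of m) ^ k) s t)
    (M : (S → ℝ) →L[ℝ] (S → ℝ))
    (hM : ∀ (v : S → ℝ) (s : S), M v s = ∑ t : S, m s t * v t)
    (r : ℝ)
    (hr : Tendsto (fun k : ℕ => ‖M ^ k‖ ^ ((1 : ℝ) / k)) atTop (𝓝 r))
    (la : ℝ) (hla0 : 0 < la) (hlar : la < r) :
    ∃ h : S → ℝ, (∀ s, 1 ≤ h s) ∧ (∀ s, la * h s ≤ ∑ t : S, m s t * h t) := by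
  classical
  set μ : ℝ := (la + r)/2 with hμdef
  set μ' : ℝ := (μ + r)/2 with hμ'def
  have hμ0 : 0 < μ := by rw [hμdef]; linarith
  have hμr : μ < r := by rw [hμdef]; linarith
  have hμμ' : μ < μ' := by rw [hμ'def]; linarith
  have hμ'r : μ' < r := by rw [hμ'def]; linarith
  have hlaμ : la ≤ μ := by rw [hμdef]; linarith
  have hμ'0 : 0 < μ' := lt_trans hμ0 hμμ'
  -- eventually ‖M^n‖ ≥ μ'^n
  have hev1 : ∀ᶠ n : ℕ in atTop, μ' < ‖M ^ n‖ ^ ((1:ℝ)/n) :=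
    hr.eventually (eventually_gt_nhds hμ'r)
  obtain ⟨ℓ, hℓ1, hprim⟩ := hm_prim
  -- δ : uniform lower bound on entries of m^ℓ
  set δ : ℝ := Finset.univ.inf' Finset.univ_nonempty
      (fun s : S => Finset.univ.inf' Finset.univ_nonempty
        (fun t : S => ((Matrix.of m) ^ ℓ) s t)) with hδdef
  have hδpos : 0 < δ := by
    rw [hδdef, Finset.lt_inf'_iff]
    intro s _
    rw [Finset.lt_inf'_iff]
    intro t _
    exact hprim s t
  have hδle : ∀ s t, δ ≤ ((Matrix.of m) ^ ℓ) s t := fun s t =>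
    le_trans (Finset.inf'_le _ (Finset.mem_univ s)) (Finset.inf'_le _ (Finset.mem_univ t))
  -- choose n
  have hev2 : ∀ᶠ n : ℕ in atTop, μ ^ ℓ / δ ≤ (μ'/μ) ^ n :=
    (tendsto_pow_atTop_atTop_of_one_lt (by rw [lt_div_iff₀ hμ0]; linarith)).eventually_ge_atTop _
  obtain ⟨n, hn1, hnev, hngeo⟩ :=
    ((eventually_ge_atTop 1).and (hev1.and hev2)).exists
  -- ‖M^n‖ ≥ μ'^n
  have hnorm : μ' ^ n ≤ ‖M ^ n‖ := by
    have h0 : (0:ℝ) ≤ ‖M ^ n‖ := norm_nonneg _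
    have := pow_lt_pow_left₀ hnev (le_of_lt hμ'0) (by omega : n ≠ 0)
    calc μ' ^ n ≤ (‖M ^ n‖ ^ ((1:ℝ)/n)) ^ n := le_of_lt this
      _ = ‖M ^ n‖ := by
          rw [← Real.rpow_natCast (‖M ^ n‖ ^ ((1:ℝ)/n)) n, ← Real.rpow_mul h0,
            one_div, inv_mul_cancel₀ (by exact_mod_cast (by omega : n ≠ 0) : (n:ℝ) ≠ 0),
            Real.rpow_one]
  -- the vectors u i = M^i 1
  set u : ℕ → S → ℝ := fun i => (M ^ i) (fun _ => 1) with hudef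
  have hu_entry : ∀ i s, u i s = ∑ t : S, ((Matrix.of m) ^ i) s t := by
    intro i s
    show (M ^ i) (fun _ => 1) s = _
    rw [clm_pow_apply m M hM i (fun _ => 1) s]
    simp
  have hu_nonneg : ∀ i s, 0 ≤ u i s := by
    intro i s
    rw [hu_entry]
    exact Finset.sum_nonneg fun t _ => matpow_nonneg m hm_nonneg i s t
  have hu0 : ∀ s, u 0 s = 1 := by intro s; show (M ^ 0) (fun _ => 1) s = 1; simp
  -- ‖M^n‖ ≤ sup of u n
  set B : ℝ := Finset.univ.sup' Finset.univ_nonempty (u n) with hBdef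
  have hBnonneg : 0 ≤ B := le_trans (hu_nonneg n (Classical.arbitrary S))
    (Finset.le_sup' _ (Finset.mem_univ _))
  have hMB : ‖M ^ n‖ ≤ B := by
    apply ContinuousLinearMap.opNorm_le_bound _ hBnonneg
    intro v
    rw [pi_norm_le_iff_of_nonneg (by positivity)]
    intro s
    rw [Real.norm_eq_abs, clm_pow_apply m M hM n v s]
    calc |∑ t : S, ((Matrix.of m) ^ n) s t * v t|
        ≤ ∑ t : S, |((Matrix.of m) ^ n) s t * v t| := Finset.abs_sum_le_sum_abs _ _
      _ ≤ ∑ t : S, ((Matrix.of m) ^ n) s t * ‖v‖ := by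
          apply Finset.sum_le_sum
          intro t _
          rw [abs_mul, abs_of_nonneg (matpow_nonneg m hm_nonneg n s t)]
          exact mul_le_mul_of_nonneg_left (norm_le_pi_norm v t)
            (matpow_nonneg m hm_nonneg n s t)
      _ = u n s * ‖v‖ := by rw [hu_entry, Finset.sum_mul]
      _ ≤ B * ‖v‖ := mul_le_mul_of_nonneg_right
          (Finset.le_sup' _ (Finset.mem_univ s)) (norm_nonneg v)
  -- key entrywise bound : u (ℓ + n) s ≥ μ^(ℓ+n)
  set K : ℕ := ℓ + n with hKdef
  have hkey : ∀ s, μ ^ K ≤ u K s := by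
    intro s
    obtain ⟨t₀, _, ht₀⟩ := Finset.exists_mem_eq_sup' (Finset.univ_nonempty (α := S)) (u n)
    have h1 : u K s = ∑ t : S, ((Matrix.of m) ^ ℓ) s t * u n t := by
      have : (M ^ K) = (M ^ ℓ) * (M ^ n) := by rw [hKdef, pow_add]
      rw [hudef]
      show (M ^ K) (fun _ => 1) s = _
      rw [this]
      exact clm_pow_apply m M hM ℓ ((M ^ n) (fun _ => 1)) s
    have h2 : δ * B ≤ ∑ t : S, ((Matrix.of m) ^ ℓ) s t * u n t := by
      calc δ * B = δ * u n t₀ := by rw [hBdef, ht₀]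
        _ ≤ ((Matrix.of m) ^ ℓ) s t₀ * u n t₀ :=
            mul_le_mul_of_nonneg_right (hδle s t₀) (hu_nonneg n t₀)
        _ ≤ _ := Finset.single_le_sum
            (fun t _ => mul_nonneg (matpow_nonneg m hm_nonneg ℓ s t) (hu_nonneg n t))
            (Finset.mem_univ t₀)
    have h3 : μ ^ K ≤ δ * B := by
      have h5 : μ ^ ℓ / δ * (δ * μ ^ n) ≤ (μ'/μ)^n * (δ * μ ^ n) :=
        mul_le_mul_of_nonneg_right hngeo (by positivity)
      have hδ0 : δ ≠ 0 := ne_of_gt hδpos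
      have hμne : μ ≠ 0 := ne_of_gt hμ0
      have e1 : μ ^ ℓ / δ * (δ * μ ^ n) = μ ^ ℓ * μ ^ n := by field_simp
      have e2 : (μ'/μ)^n * (δ * μ ^ n) = δ * μ' ^ n := by
        rw [div_pow]; field_simp
      have h4 : μ ^ K ≤ δ * μ' ^ n := by
        rw [hKdef, pow_add, ← e1, ← e2]; exact h5
      calc μ ^ K ≤ δ * μ' ^ n := h4
        _ ≤ δ * ‖M ^ n‖ := mul_le_mul_of_nonneg_left hnorm (le_of_lt hδpos)
        _ ≤ δ * B := mul_le_mul_of_nonneg_left hMB (le_of_lt hδpos)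
    rw [h1]; linarith
  obtain ⟨K', hK'⟩ : ∃ K', K = K' + 1 := ⟨K - 1, by omega⟩
  rw [hK'] at hkey
  have hui1 : ∀ (i : ℕ) (s : S), u (i+1) s = ∑ t : S, m s t * u i t := by
    intro i s
    have he : (M ^ (i+1)) (fun _ => (1:ℝ)) = M ((M ^ i) (fun _ => 1)) := by
      rw [pow_succ']; rfl
    show (M ^ (i+1)) (fun _ => (1:ℝ)) s = _
    rw [he, hM]
  refine ⟨fun s => ∑ i ∈ Finset.range (K'+1), μ⁻¹ ^ i * u i s, ?_, ?_⟩
  · intro s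
    calc (1:ℝ) = μ⁻¹ ^ 0 * u 0 s := by rw [hu0]; simp
      _ ≤ _ := Finset.single_le_sum
          (fun i _ => mul_nonneg (by positivity) (hu_nonneg i s))
          (by rw [Finset.mem_range]; omega)
  · intro s
    have hM_h : ∑ t : S, m s t * ∑ i ∈ Finset.range (K'+1), μ⁻¹ ^ i * u i t
        = ∑ i ∈ Finset.range (K'+1), μ⁻¹ ^ i * u (i+1) s := by
      simp_rw [Finset.mul_sum]
      rw [Finset.sum_comm]
      refine Finset.sum_congr rfl fun i _ => ?_
      rw [hui1 i s, Finset.mul_sum]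
      refine Finset.sum_congr rfl fun t _ => ?_
      ring
    rw [hM_h]
    have hLHS : ∑ i ∈ Finset.range (K'+1), μ⁻¹ ^ i * u (i+1) s
        = ∑ i ∈ Finset.range K', μ⁻¹ ^ i * u (i+1) s + μ⁻¹ ^ K' * u (K'+1) s :=
      Finset.sum_range_succ _ _
    have hμne : μ ≠ 0 := ne_of_gt hμ0
    have hRHS : μ * ∑ i ∈ Finset.range (K'+1), μ⁻¹ ^ i * u i s
        = μ + ∑ i ∈ Finset.range K', μ⁻¹ ^ i * u (i+1) s := by
      rw [Finset.sum_range_succ' (fun i => μ⁻¹ ^ i * u i s) K']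
      rw [mul_add, hu0]
      rw [Finset.mul_sum]
      have : ∀ i, μ * (μ⁻¹ ^ (i+1) * u (i+1) s) = μ⁻¹ ^ i * u (i+1) s := by
        intro i
        rw [pow_succ]
        field_simp
      simp_rw [this]
      ring
    have hfinal : μ ≤ μ⁻¹ ^ K' * u (K'+1) s := by
      have hk := hkey s
      calc μ = μ⁻¹ ^ K' * μ ^ (K'+1) := by
            rw [pow_succ]
            field_simp
            rw [← mul_pow, one_div_mul_cancel hμne, one_pow]
        _ ≤ μ⁻¹ ^ K' * u (K'+1) s :=
            mul_le_mul_of_nonneg_left hk (by positivity)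
    have hmain : μ * ∑ i ∈ Finset.range (K'+1), μ⁻¹ ^ i * u i s
        ≤ ∑ i ∈ Finset.range (K'+1), μ⁻¹ ^ i * u (i+1) s := by
      rw [hLHS, hRHS]
      linarith
    have hh1 : (0:ℝ) ≤ ∑ i ∈ Finset.range (K'+1), μ⁻¹ ^ i * u i s :=
      Finset.sum_nonneg fun i _ => mul_nonneg (by positivity) (hu_nonneg i s)
    calc la * ∑ i ∈ Finset.range (K'+1), μ⁻¹ ^ i * u i s
        ≤ μ * ∑ i ∈ Finset.range (K'+1), μ⁻¹ ^ i * u i s :=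
          mul_le_mul_of_nonneg_right hlaμ hh1
      _ ≤ _ := hmain
noncomputable def tailW (τ : ℕ → ℝ) : ℕ → ℝ := fun i => ∑' n, τ (n + i)

lemma tailW_facts (τ : ℕ → ℝ) (hτ_nonneg : ∀ j, 0 ≤ τ j) (hτ_sum : HasSum τ 1)
    (hτ_mean : Summable fun j : ℕ => (j : ℝ) * τ j) :
    (∀ i, 0 ≤ tailW τ i) ∧ tailW τ 0 = 1 ∧
    (∀ i, tailW τ i = τ i + tailW τ (i+1)) ∧ Summable (tailW τ) := by
  have hτs : Summable τ := hτ_sum.summable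
  have hshift : ∀ i, Summable fun n => τ (n + i) := fun i => (summable_nat_add_iff i).2 hτs
  have hw_nonneg : ∀ i, 0 ≤ tailW τ i := fun i => tsum_nonneg fun n => hτ_nonneg _
  have hw0 : tailW τ 0 = 1 := by
    unfold tailW
    simp only [Nat.add_zero]
    exact hτ_sum.tsum_eq
  have hw_rec : ∀ i, tailW τ i = τ i + tailW τ (i+1) := by
    intro i
    unfold tailW
    rw [Summable.tsum_eq_zero_add (hshift i)]
    simp only [Nat.zero_add]
    congr 1
    apply tsum_congr
    intro n
    congr 1
    omega
  -- mean tails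
  have hmean_shift : ∀ i, Summable fun n => ((n + i : ℕ) : ℝ) * τ (n + i) :=
    fun i => (summable_nat_add_iff i).2 hτ_mean
  have hA_summ : ∀ i : ℕ, Summable fun n : ℕ => (n : ℝ) * τ (n + i) := by
    intro i
    apply Summable.of_nonneg_of_le (fun n => mul_nonneg (Nat.cast_nonneg n) (hτ_nonneg _))
      (fun n => ?_) (hmean_shift i)
    exact mul_le_mul_of_nonneg_right (by exact_mod_cast Nat.le_add_right n i) (hτ_nonneg _)
  set A : ℕ → ℝ := fun i => ∑' n : ℕ, (n : ℝ) * τ (n + i) with hAdef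
  have hA_nonneg : ∀ i, 0 ≤ A i := fun i =>
    tsum_nonneg fun n => mul_nonneg (Nat.cast_nonneg n) (hτ_nonneg _)
  have hA_rec : ∀ i, A i = A (i+1) + tailW τ (i+1) := by
    intro i
    show (∑' n : ℕ, (n:ℝ) * τ (n + i)) = (∑' n : ℕ, (n:ℝ) * τ (n + (i+1))) + tailW τ (i+1)
    rw [Summable.tsum_eq_zero_add (hA_summ i)]
    simp only [Nat.cast_zero, zero_mul, zero_add]
    have : ∀ n : ℕ, ((n + 1 : ℕ) : ℝ) * τ (n + 1 + i) =
        (n : ℝ) * τ (n + (i+1)) + τ (n + (i+1)) := by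
      intro n
      have : n + 1 + i = n + (i + 1) := by omega
      rw [this]
      push_cast
      ring
    rw [tsum_congr this, Summable.tsum_add]
    · rfl
    · exact hA_summ (i+1)
    · exact hshift (i+1)
  have hpartial : ∀ k, ∑ i ∈ Finset.range (k+1), tailW τ i + A k = tailW τ 0 + A 0 := by
    intro k
    induction k with
    | zero => simp
    | succ k ih =>
      rw [Finset.sum_range_succ, Finset.sum_range_succ]
      rw [Finset.sum_range_succ, hA_rec k] at ih
      linarith
  refine ⟨hw_nonneg, hw0, hw_rec, ?_⟩
  apply summable_of_sum_range_le hw_nonneg (c := 1 + A 0)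
  intro n
  match n with
  | 0 => simp; linarith [hA_nonneg 0]
  | k + 1 =>
    have := hpartial k
    rw [hw0] at this
    linarith [hA_nonneg k]
lemma jensen_exp (τ : ℕ → ℝ) (hτ_nonneg : ∀ j, 0 ≤ τ j) (hτ_sum : HasSum τ 1)
    (a : ℕ → ℝ) (C : ℝ) (ha : ∀ j, |a j| ≤ C) :
    Real.exp (∑' j, τ j * a j) ≤ ∑' j, τ j * Real.exp (a j) := by
  have hτs : Summable τ := hτ_sum.summable
  have hsa : Summable fun j => τ j * a j := by
    apply Summable.of_norm_bounded (hτs.mul_right C)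
    intro j
    rw [Real.norm_eq_abs, abs_mul, abs_of_nonneg (hτ_nonneg j)]
    exact mul_le_mul_of_nonneg_left (ha j) (hτ_nonneg j)
  have hse : Summable fun j => τ j * Real.exp (a j) := by
    apply Summable.of_nonneg_of_le
      (fun j => mul_nonneg (hτ_nonneg j) (Real.exp_nonneg _))
      (fun j => ?_) (hτs.mul_right (Real.exp C))
    exact mul_le_mul_of_nonneg_left
      (Real.exp_le_exp.2 (le_trans (le_abs_self _) (ha j))) (hτ_nonneg j)
  set c : ℝ := ∑' j, τ j * a j with hc
  have htangent : ∀ j, Real.exp c * (τ j * a j) + (Real.exp c - Real.exp c * c) * τ j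
      ≤ τ j * Real.exp (a j) := by
    intro j
    have h1 : (a j - c) + 1 ≤ Real.exp (a j - c) := Real.add_one_le_exp _
    have h2 : Real.exp c * ((a j - c) + 1) ≤ Real.exp (a j) := by
      calc Real.exp c * ((a j - c) + 1) ≤ Real.exp c * Real.exp (a j - c) :=
            mul_le_mul_of_nonneg_left h1 (Real.exp_nonneg c)
        _ = Real.exp (c + (a j - c)) := (Real.exp_add _ _).symm
        _ = Real.exp (a j) := by congr 1; ring
    calc Real.exp c * (τ j * a j) + (Real.exp c - Real.exp c * c) * τ j
        = τ j * (Real.exp c * ((a j - c) + 1)) := by ring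
      _ ≤ τ j * Real.exp (a j) := mul_le_mul_of_nonneg_left h2 (hτ_nonneg j)
  have hsum_tangent : Summable fun j =>
      Real.exp c * (τ j * a j) + (Real.exp c - Real.exp c * c) * τ j :=
    (hsa.mul_left _).add (hτs.mul_left _)
  calc Real.exp c
      = Real.exp c * c + (Real.exp c - Real.exp c * c) * 1 := by ring
    _ = ∑' j, (Real.exp c * (τ j * a j) + (Real.exp c - Real.exp c * c) * τ j) := by
        rw [Summable.tsum_add (hsa.mul_left _) (hτs.mul_left _), tsum_mul_left, tsum_mul_left,
          hτ_sum.tsum_eq, ← hc]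
    _ ≤ ∑' j, τ j * Real.exp (a j) := Summable.tsum_le_tsum htangent hsum_tangent hse

/-- **Theorem 1.** The spectral radius `R` of the memory operator `𝐦` (acting as a bounded
linear operator `T` on `C(𝒮, ℝ)`, `𝒮 = S^ℕ`) is bounded below by the spectral radius `r`
of the mean reproduction matrix `m`; here both spectral radii are given by Gelfand's
formula `lim ‖·^k‖^(1/k)`. -/
theorem spectralRadius_memory_ge
    {S : Type*} [Fintype S] [Nonempty S] [DecidableEq S]
    [TopologicalSpace S] [DiscreteTopology S]
    (m : S → S → ℝ)
    (hm_nonneg : ∀ s t, 0 ≤ m s t)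
    (hm_prim : ∃ k : ℕ, 1 ≤ k ∧ ∀ s t, 0 < ((Matrix.of m) ^ k) s t)
    (τ : ℕ → ℝ)
    (hτ_nonneg : ∀ j, 0 ≤ τ j) (hτ_sum : HasSum τ 1)
    (hτ_zero : 0 < τ 0)
    (hτ_mean : Summable fun j : ℕ => (j : ℝ) * τ j)
    -- the memory operator `𝐦` as a bounded linear operator on `C(𝒮, ℝ)`
    (T : C(ℕ → S, ℝ) →L[ℝ] C(ℕ → S, ℝ))
    (hT : ∀ (f : C(ℕ → S, ℝ)) (x : ℕ → S),
      T f x = ∑' j : ℕ, τ j * ∑ t : S, m (x j) t * f (memCons t x))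
    -- the matrix `m` viewed as a linear operator on `ℝ^S`
    (M : (S → ℝ) →L[ℝ] (S → ℝ))
    (hM : ∀ (v : S → ℝ) (s : S), M v s = ∑ t : S, m s t * v t)
    -- the two spectral radii, via Gelfand's formula
    (R r : ℝ)
    (hR : Tendsto (fun k : ℕ => ‖T ^ k‖ ^ ((1 : ℝ) / k)) atTop (𝓝 R))
    (hr : Tendsto (fun k : ℕ => ‖M ^ k‖ ^ ((1 : ℝ) / k)) atTop (𝓝 r)) :
    r ≤ R := by
  classical
  have hτs : Summable τ := hτ_sum.summable
  have hR0 : 0 ≤ R :=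
    le_of_tendsto_of_tendsto' tendsto_const_nhds hR
      (fun k => Real.rpow_nonneg (norm_nonneg (T ^ k)) _)
  suffices hmain : ∀ la : ℝ, 0 < la → la < r → la ≤ R by
    refine le_of_forall_lt fun c hc => ?_
    rcases lt_or_ge c 0 with h0 | h0
    · exact lt_of_lt_of_le h0 hR0
    · have hr0 : 0 < r := lt_of_le_of_lt h0 hc
      have h1 : (0:ℝ) < (c + r)/2 := by linarith
      have h2 : (c + r)/2 < r := by linarith
      exact lt_of_lt_of_le (by linarith : c < (c+r)/2) (hmain _ h1 h2)
  intro la hla0 hlar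
  obtain ⟨h, hh1, hhsub⟩ := subinvariant_vector m hm_nonneg hm_prim M hM r hr la hla0 hlar
  have hh0 : ∀ s, 0 < h s := fun s => lt_of_lt_of_le one_pos (hh1 s)
  obtain ⟨hw_nonneg, hw0, hw_rec, hw_summ⟩ := tailW_facts τ hτ_nonneg hτ_sum hτ_mean
  set w : ℕ → ℝ := tailW τ with hwdef
  -- log bounds
  have hlogh0 : ∀ s, 0 ≤ Real.log (h s) := fun s => Real.log_nonneg (hh1 s)
  set L : ℝ := Finset.univ.sup' Finset.univ_nonempty (fun s => Real.log (h s)) with hLdef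
  have hlogL : ∀ s, Real.log (h s) ≤ L := fun s => by
    rw [hLdef]; exact Finset.le_sup' (fun s => Real.log (h s)) (Finset.mem_univ s)
  have hL0 : 0 ≤ L := le_trans (hlogh0 (Classical.arbitrary S)) (hlogL _)
  have hgsum : ∀ (v : ℕ → ℝ), (∀ i, 0 ≤ v i) → Summable v → ∀ (y : ℕ → S),
      Summable fun i => v i * Real.log (h (y i)) := by
    intro v hv hvs y
    exact Summable.of_nonneg_of_le (fun i => mul_nonneg (hv i) (hlogh0 _))
      (fun i => mul_le_mul_of_nonneg_left (hlogL _) (hv i)) (hvs.mul_right L)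
  have hw1_summ : Summable fun i => w (i+1) := (summable_nat_add_iff 1).2 hw_summ
  have hw1_nonneg : ∀ i : ℕ, 0 ≤ w (i+1) := fun i => hw_nonneg _
  set D : ℝ := ∑' i, w i with hDdef
  -- the test function F
  have hg_cont : Continuous fun y : ℕ → S => ∑' i, w i * Real.log (h (y i)) := by
    apply continuous_tsum (u := fun i => w i * L)
    · intro i
      exact continuous_const.mul ((continuous_of_discreteTopology
        (f := fun s : S => Real.log (h s))).comp (continuous_apply i))
    · exact hw_summ.mul_right L
    · intro i y
      rw [Real.norm_eq_abs, abs_mul, abs_of_nonneg (hw_nonneg i),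
        abs_of_nonneg (hlogh0 _)]
      exact mul_le_mul_of_nonneg_left (hlogL _) (hw_nonneg i)
  set F : C(ℕ → S, ℝ) := ⟨fun y => Real.exp (∑' i, w i * Real.log (h (y i))),
    Real.continuous_exp.comp hg_cont⟩ with hFdef
  have hFapp : ∀ y, F y = Real.exp (∑' i, w i * Real.log (h (y i))) := fun y => rfl
  have hF1 : ∀ y, 1 ≤ F y := by
    intro y
    rw [hFapp, show (1:ℝ) = Real.exp 0 from Real.exp_zero.symm]
    exact Real.exp_le_exp.2 (tsum_nonneg fun i => mul_nonneg (hw_nonneg i) (hlogh0 _))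
  have hFbound : ∀ y, F y ≤ Real.exp (D * L) := by
    intro y
    rw [hFapp]
    apply Real.exp_le_exp.2
    calc (∑' i, w i * Real.log (h (y i))) ≤ ∑' i, w i * L :=
        Summable.tsum_le_tsum (fun i => mul_le_mul_of_nonneg_left (hlogL _) (hw_nonneg i))
          (hgsum w hw_nonneg hw_summ y) (hw_summ.mul_right L)
      _ = D * L := by rw [tsum_mul_right]
  -- the mean-matrix image of h
  set ψ : S → ℝ := fun s => ∑ t : S, m s t * h t with hψdef
  have hψap : ∀ s, ψ s = ∑ t : S, m s t * h t := fun s => rfl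
  have hψge : ∀ s, la * h s ≤ ψ s := hhsub
  have hψ0 : ∀ s, 0 < ψ s := fun s =>
    lt_of_lt_of_le (mul_pos hla0 (hh0 s)) (hψge s)
  set Bψ : ℝ := Finset.univ.sup' Finset.univ_nonempty (fun s => |Real.log (ψ s)|) with hBψ
  have hBψle : ∀ s, |Real.log (ψ s)| ≤ Bψ := fun s => by
    rw [hBψ]; exact Finset.le_sup' (fun s => |Real.log (ψ s)|) (Finset.mem_univ s)
  -- key pointwise inequality : T F ≥ la • F
  have hkey : ∀ x : ℕ → S, la * F x ≤ (T F) x := by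
    intro x
    set P : ℝ := Real.exp (∑' i, w (i+1) * Real.log (h (x i))) with hPdef
    have hP0 : 0 < P := Real.exp_pos _
    have hcons : ∀ t : S, F (memCons t x) = h t * P := by
      intro t
      rw [hFapp]
      have hs : Summable fun i => w i * Real.log (h (memCons t x i)) :=
        hgsum w hw_nonneg hw_summ _
      rw [Summable.tsum_eq_zero_add hs]
      have e0 : w 0 * Real.log (h (memCons t x 0)) = Real.log (h t) := by
        rw [hw0]; simp [memCons]
      have e1 : ∀ i : ℕ, w (i+1) * Real.log (h (memCons t x (i+1)))
          = w (i+1) * Real.log (h (x i)) := fun i => rfl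
      rw [e0, tsum_congr e1, Real.exp_add, Real.exp_log (hh0 t), ← hPdef]
    have hstep : ∀ j : ℕ, ∑ t : S, m (x j) t * F (memCons t x) = ψ (x j) * P := by
      intro j
      calc ∑ t : S, m (x j) t * F (memCons t x)
          = ∑ t : S, (m (x j) t * h t) * P := by
            refine Finset.sum_congr rfl fun t _ => ?_
            rw [hcons t]; ring
        _ = ψ (x j) * P := by rw [← Finset.sum_mul, ← hψap (x j)]
    have hTFx : (T F) x = (∑' j, τ j * ψ (x j)) * P := by
      rw [hT F x]
      calc ∑' j, τ j * ∑ t : S, m (x j) t * F (memCons t x)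
          = ∑' j, (τ j * ψ (x j)) * P := by
            refine tsum_congr fun j => ?_
            rw [hstep j]; ring
        _ = (∑' j, τ j * ψ (x j)) * P := tsum_mul_right
    have hja : ∀ j, |Real.log (ψ (x j))| ≤ Bψ := fun j => hBψle _
    have hjen : Real.exp (∑' j, τ j * Real.log (ψ (x j))) ≤ ∑' j, τ j * ψ (x j) := by
      calc Real.exp (∑' j, τ j * Real.log (ψ (x j)))
          ≤ ∑' j, τ j * Real.exp (Real.log (ψ (x j))) :=
            jensen_exp τ hτ_nonneg hτ_sum (fun j => Real.log (ψ (x j))) Bψ hja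
        _ = ∑' j, τ j * ψ (x j) := by
            refine tsum_congr fun j => ?_
            rw [Real.exp_log (hψ0 _)]
    have hlogψ : ∀ j, τ j * (Real.log la + Real.log (h (x j))) ≤ τ j * Real.log (ψ (x j)) := by
      intro j
      apply mul_le_mul_of_nonneg_left _ (hτ_nonneg j)
      calc Real.log la + Real.log (h (x j)) = Real.log (la * h (x j)) :=
          (Real.log_mul (ne_of_gt hla0) (ne_of_gt (hh0 _))).symm
        _ ≤ Real.log (ψ (x j)) := Real.log_le_log (mul_pos hla0 (hh0 _)) (hψge _)
    have hsψ : Summable fun j => τ j * Real.log (ψ (x j)) := by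
      apply Summable.of_norm_bounded (hτs.mul_right _)
      intro j
      rw [Real.norm_eq_abs, abs_mul, abs_of_nonneg (hτ_nonneg j)]
      exact mul_le_mul_of_nonneg_left (hja j) (hτ_nonneg j)
    have hsl : Summable fun j => τ j * (Real.log la + Real.log (h (x j))) := by
      have e : (fun j => τ j * (Real.log la + Real.log (h (x j))))
          = fun j => τ j * Real.log la + τ j * Real.log (h (x j)) := by
        funext j; ring
      rw [e]
      exact (hτs.mul_right _).add (hgsum τ hτ_nonneg hτs x)
    have hsum_split : ∑' j, τ j * (Real.log la + Real.log (h (x j)))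
        = Real.log la + ∑' j, τ j * Real.log (h (x j)) := by
      calc ∑' j, τ j * (Real.log la + Real.log (h (x j)))
          = ∑' j, (τ j * Real.log la + τ j * Real.log (h (x j))) :=
            tsum_congr fun j => by ring
        _ = (∑' j, τ j * Real.log la) + ∑' j, τ j * Real.log (h (x j)) :=
            Summable.tsum_add (hτs.mul_right _) (hgsum τ hτ_nonneg hτs x)
        _ = Real.log la + ∑' j, τ j * Real.log (h (x j)) := by
            rw [tsum_mul_right, hτ_sum.tsum_eq, one_mul]
    have hmono : Real.exp (Real.log la + ∑' j, τ j * Real.log (h (x j)))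
        ≤ Real.exp (∑' j, τ j * Real.log (ψ (x j))) := by
      apply Real.exp_le_exp.2
      rw [← hsum_split]
      exact Summable.tsum_le_tsum hlogψ hsl hsψ
    have hQP : (∑' j, τ j * Real.log (h (x j))) + (∑' i, w (i+1) * Real.log (h (x i)))
        = ∑' i, w i * Real.log (h (x i)) := by
      rw [← Summable.tsum_add (hgsum τ hτ_nonneg hτs x) (hgsum (fun i => w (i+1)) hw1_nonneg hw1_summ x)]
      refine tsum_congr fun i => ?_
      rw [hw_rec i]; ring
    have hcombine : Real.exp (Real.log la + ∑' j, τ j * Real.log (h (x j))) * P = la * F x := by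
      calc Real.exp (Real.log la + ∑' j, τ j * Real.log (h (x j))) * P
          = Real.exp ((Real.log la + ∑' j, τ j * Real.log (h (x j)))
              + (∑' i, w (i+1) * Real.log (h (x i)))) := by
            rw [hPdef, ← Real.exp_add]
        _ = Real.exp (Real.log la + ∑' i, w i * Real.log (h (x i))) := by
            rw [add_assoc, hQP]
        _ = la * F x := by
            rw [Real.exp_add, Real.exp_log hla0, hFapp]
    calc la * F x
        = Real.exp (Real.log la + ∑' j, τ j * Real.log (h (x j))) * P := hcombine.symm
      _ ≤ Real.exp (∑' j, τ j * Real.log (ψ (x j))) * P :=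
          mul_le_mul_of_nonneg_right hmono (le_of_lt hP0)
      _ ≤ (∑' j, τ j * ψ (x j)) * P :=
          mul_le_mul_of_nonneg_right hjen (le_of_lt hP0)
      _ = (T F) x := hTFx.symm
  -- monotonicity of T and its powers
  set Cm : ℝ := ∑ s : S, ∑ t : S, m s t with hCm
  have hrow : ∀ s, (∑ t : S, m s t) ≤ Cm := fun s =>
    Finset.single_le_sum (fun s' _ => Finset.sum_nonneg fun t _ => hm_nonneg s' t)
      (Finset.mem_univ s)
  have hTsum : ∀ (g : C(ℕ → S, ℝ)) (x : ℕ → S),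
      Summable fun j => τ j * ∑ t : S, m (x j) t * g (memCons t x) := by
    intro g x
    apply Summable.of_norm_bounded (hτs.mul_right (Cm * ‖g‖))
    intro j
    rw [Real.norm_eq_abs, abs_mul, abs_of_nonneg (hτ_nonneg j)]
    apply mul_le_mul_of_nonneg_left _ (hτ_nonneg j)
    calc |∑ t : S, m (x j) t * g (memCons t x)|
        ≤ ∑ t : S, |m (x j) t * g (memCons t x)| := Finset.abs_sum_le_sum_abs _ _
      _ ≤ ∑ t : S, m (x j) t * ‖g‖ := by
          refine Finset.sum_le_sum fun t _ => ?_
          rw [abs_mul, abs_of_nonneg (hm_nonneg _ _)]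
          apply mul_le_mul_of_nonneg_left _ (hm_nonneg _ _)
          rw [← Real.norm_eq_abs]
          exact g.norm_coe_le_norm _
      _ = (∑ t : S, m (x j) t) * ‖g‖ := (Finset.sum_mul _ _ _).symm
      _ ≤ Cm * ‖g‖ := mul_le_mul_of_nonneg_right (hrow _) (norm_nonneg g)
  have hTmono : ∀ (g₁ g₂ : C(ℕ → S, ℝ)), (∀ y, g₁ y ≤ g₂ y) → ∀ x, (T g₁) x ≤ (T g₂) x := by
    intro g₁ g₂ hg x
    rw [hT g₁ x, hT g₂ x]
    refine Summable.tsum_le_tsum (fun j => ?_) (hTsum g₁ x) (hTsum g₂ x)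
    apply mul_le_mul_of_nonneg_left _ (hτ_nonneg j)
    exact Finset.sum_le_sum fun t _ => mul_le_mul_of_nonneg_left (hg _) (hm_nonneg _ _)
  have hTkmono : ∀ (k : ℕ) (g₁ g₂ : C(ℕ → S, ℝ)), (∀ y, g₁ y ≤ g₂ y) →
      ∀ x, ((T^k) g₁) x ≤ ((T^k) g₂) x := by
    intro k
    induction k with
    | zero => intro g₁ g₂ hg x; simpa using hg x
    | succ k ih =>
      intro g₁ g₂ hg x
      have e : ∀ g : C(ℕ → S, ℝ), (T^(k+1)) g = (T^k) (T g) := by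
        intro g; rw [pow_succ]; rfl
      rw [e g₁, e g₂]
      exact ih _ _ (fun y => hTmono g₁ g₂ hg y) x
  have hpow : ∀ (k : ℕ) (x : ℕ → S), la ^ k * F x ≤ ((T^k) F) x := by
    intro k
    induction k with
    | zero => intro x; simp
    | succ k ih =>
      intro x
      have e : (T^(k+1)) F = (T^k) (T F) := by rw [pow_succ]; rfl
      rw [e]
      have h1 : ∀ y, (la • F) y ≤ (T F) y := by
        intro y
        simpa using hkey y
      have h3 : ((T^k) (la • F)) x = la * ((T^k) F) x := by
        rw [map_smul]
        simp
      calc la^(k+1) * F x = la * (la^k * F x) := by ring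
        _ ≤ la * ((T^k) F) x := mul_le_mul_of_nonneg_left (ih x) (le_of_lt hla0)
        _ = ((T^k) (la • F)) x := h3.symm
        _ ≤ ((T^k) (T F)) x := hTkmono k _ _ h1 x
  -- norm lower bound
  set E : ℝ := Real.exp (D * L) with hE
  have hE0 : 0 < E := Real.exp_pos _
  have hFnorm : ‖F‖ ≤ E := by
    apply (ContinuousMap.norm_le F (le_of_lt hE0)).2
    intro x
    rw [Real.norm_eq_abs, abs_of_nonneg (le_trans zero_le_one (hF1 x))]
    exact hFbound x
  have hnormTk : ∀ k : ℕ, la ^ k / E ≤ ‖T^k‖ := by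
    intro k
    set x₀ : ℕ → S := fun _ => Classical.arbitrary S with hx₀
    have h1 : la ^ k ≤ ((T^k) F) x₀ := by
      calc la ^ k = la ^ k * 1 := (mul_one _).symm
        _ ≤ la ^ k * F x₀ := mul_le_mul_of_nonneg_left (hF1 x₀) (by positivity)
        _ ≤ _ := hpow k x₀
    have h2 : ((T^k) F) x₀ ≤ ‖(T^k) F‖ := by
      refine le_trans (le_abs_self _) ?_
      rw [← Real.norm_eq_abs]
      exact ((T^k) F).norm_coe_le_norm x₀
    have h3 : ‖(T^k) F‖ ≤ ‖T^k‖ * E :=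
      le_trans ((T^k).le_opNorm F) (mul_le_mul_of_nonneg_left hFnorm (norm_nonneg _))
    rw [div_le_iff₀ hE0]
    exact le_trans h1 (le_trans h2 h3)
  -- pass to the limit
  have hE1 : Tendsto (fun k : ℕ => E ^ ((1:ℝ)/k)) atTop (𝓝 1) := by
    have h0 : Tendsto (fun k : ℕ => Real.log E * ((1:ℝ)/k)) atTop (𝓝 0) := by
      simpa using tendsto_one_div_atTop_nhds_zero_nat.const_mul (Real.log E)
    have h4 := (Real.continuous_exp.tendsto 0).comp h0
    simp only [Real.exp_zero] at h4
    have e : (fun k : ℕ => E ^ ((1:ℝ)/k))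
        = fun k : ℕ => Real.exp (Real.log E * ((1:ℝ)/k)) :=
      funext fun k => Real.rpow_def_of_pos hE0 _
    rw [e]
    exact h4
  have hlim : Tendsto (fun k : ℕ => la / E ^ ((1:ℝ)/k)) atTop (𝓝 la) := by
    have := Tendsto.div (tendsto_const_nhds (x := la) (f := atTop)) hE1 one_ne_zero
    simpa [Pi.div_def] using this
  refine le_of_tendsto_of_tendsto hlim hR ?_
  filter_upwards [eventually_ge_atTop 1] with k hk
  have hkne : (k:ℝ) ≠ 0 := by
    have : 0 < k := hk
    exact_mod_cast this.ne'
  have hb : 0 ≤ la ^ k / E := by positivity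
  have step1 : (la ^ k / E) ^ ((1:ℝ)/k) ≤ ‖T^k‖ ^ ((1:ℝ)/k) :=
    Real.rpow_le_rpow hb (hnormTk k) (by positivity)
  have step2 : (la ^ k / E) ^ ((1:ℝ)/k) = la / E ^ ((1:ℝ)/k) := by
    rw [Real.div_rpow (by positivity) (le_of_lt hE0)]
    congr 1
    rw [← Real.rpow_natCast la k, ← Real.rpow_mul (le_of_lt hla0)]
    rw [mul_one_div, div_self hkne, Real.rpow_one]
  rw [← step2]
  exact step1
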